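/- Let σ ⊂ ℚ^N be a strongly convex N-dimensional rational polyhedral cone, σ' ⊂ ℚ^n a convex rational n-dimensional cone, and π : ℚ^N → ℚ^n a linear map with π(σ) = σ'. Then σ' equals the union of the images π(τ) over all n-dimensional faces τ of σ. -/

import Mathlib

/-- The finitely generated convex cone on a set `T`: all nonnegative rational
combinations of elements of `T`. -/
def ConeGen {V : Type*} [AddCommGroup V] [Module ℚ V] (T : Set V) : Set V :=
  {x | ∃ (s : Finset V) (c : V → ℚ), ↑s ⊆ T ∧ (∀ v, 0 ≤ c v) ∧ x = ∑ v ∈ s, c v • v}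

/-- A (rational) polyhedral cone: the cone generated by finitely many vectors. -/
def IsPolyCone {V : Type*} [AddCommGroup V] [Module ℚ V] (σ : Set V) : Prop :=
  ∃ T : Finset V, σ = ConeGen (↑T : Set V)

/-- A cone is strongly convex if it contains no line. -/
def IsStronglyConvex {V : Type*} [AddCommGroup V] [Module ℚ V] (σ : Set V) : Prop :=
  ∀ x ∈ σ, -x ∈ σ → x = 0

/-- The dimension of a cone: the dimension of its linear span. -/
noncomputable def coneDim {V : Type*} [AddCommGroup V] [Module ℚ V] (σ : Set V) : ℕ :=
  Module.finrank ℚ (Submodule.span ℚ σ)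

/-- `τ` is a face of `σ`: the intersection of `σ` with a supporting hyperplane
(including `σ` itself, via the zero functional). -/
def IsFace {V : Type*} [AddCommGroup V] [Module ℚ V] (σ τ : Set V) : Prop :=
  ∃ m : V →ₗ[ℚ] ℚ, (∀ x ∈ σ, 0 ≤ m x) ∧ τ = σ ∩ {x | m x = 0}


section Basics
variable {V : Type*} [AddCommGroup V] [Module ℚ V]

lemma mem_coneGen_iff {T : Finset V} {x : V} :
    x ∈ ConeGen (↑T : Set V) ↔ ∃ c : V → ℚ, (∀ v, 0 ≤ c v) ∧ x = ∑ v ∈ T, c v • v := by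
  classical
  constructor
  · rintro ⟨s, c, hs, hc, rfl⟩
    refine ⟨fun v => if v ∈ s then c v else 0, fun v => by dsimp only; split <;> simp [hc], ?_⟩
    have hsub : s ⊆ T := fun v hv => by exact_mod_cast hs hv
    rw [← Finset.sum_subset hsub (fun v _ hv => by simp [hv])]
    exact Finset.sum_congr rfl (fun v hv => by simp [hv])
  · rintro ⟨c, hc, rfl⟩
    exact ⟨T, c, subset_rfl, hc, rfl⟩

lemma zero_mem_coneGen (T : Set V) : 0 ∈ ConeGen T :=
  ⟨∅, 0, by simp, by simp, by simp⟩

lemma coneGen_mono {T T' : Set V} (h : T ⊆ T') : ConeGen T ⊆ ConeGen T' := by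
  rintro x ⟨s, c, hs, hc, rfl⟩
  exact ⟨s, c, hs.trans h, hc, rfl⟩

lemma subset_coneGen (T : Set V) : T ⊆ ConeGen T := by
  intro v hv
  exact ⟨{v}, fun _ => 1, by simpa, fun _ => zero_le_one, by simp⟩

lemma add_mem_coneGen {T : Finset V} {x y : V} (hx : x ∈ ConeGen (↑T : Set V))
    (hy : y ∈ ConeGen (↑T : Set V)) : x + y ∈ ConeGen (↑T : Set V) := by
  rw [mem_coneGen_iff] at *
  obtain ⟨c, hc, rfl⟩ := hx
  obtain ⟨d, hd, rfl⟩ := hy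
  exact ⟨c + d, fun v => add_nonneg (hc v) (hd v), by simp [add_smul, Finset.sum_add_distrib]⟩

lemma smul_mem_coneGen {T : Set V} {x : V} {t : ℚ} (ht : 0 ≤ t) (hx : x ∈ ConeGen T) :
    t • x ∈ ConeGen T := by
  obtain ⟨s, c, hs, hc, rfl⟩ := hx
  exact ⟨s, t • c, hs, fun v => mul_nonneg ht (hc v), by simp [Finset.smul_sum, smul_smul]⟩

lemma coneGen_subset_span (T : Set V) : ConeGen T ⊆ Submodule.span ℚ T := by
  rintro x ⟨s, c, hs, hc, rfl⟩
  exact Submodule.sum_mem _ fun v hv =>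
    Submodule.smul_mem _ _ (Submodule.subset_span (hs hv))

lemma span_coneGen (T : Set V) :
    Submodule.span ℚ (ConeGen T) = Submodule.span ℚ T := by
  refine le_antisymm (Submodule.span_le.2 (coneGen_subset_span T)) (Submodule.span_mono (subset_coneGen T))


lemma mem_coneGen_insert [DecidableEq V] {S : Finset V} {a : V} (ha : a ∉ S) {x : V} :
    x ∈ ConeGen (↑(insert a S) : Set V) ↔ ∃ t : ℚ, 0 ≤ t ∧ x - t • a ∈ ConeGen (↑S : Set V) := by
  rw [mem_coneGen_iff]
  constructor
  · rintro ⟨c, hc, rfl⟩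
    rw [Finset.sum_insert ha]
    exact ⟨c a, hc a, by rw [mem_coneGen_iff]; exact ⟨c, hc, by abel⟩⟩
  · rintro ⟨t, ht, hy⟩
    rw [mem_coneGen_iff] at hy
    obtain ⟨c, hc, hcy⟩ := hy
    refine ⟨Function.update c a t, fun v => ?_, ?_⟩
    · rcases eq_or_ne v a with rfl | h
      · simpa using ht
      · simpa [Function.update_of_ne h] using hc v
    · rw [Finset.sum_insert ha, Function.update_self]
      have : ∑ v ∈ S, Function.update c a t v • v = ∑ v ∈ S, c v • v :=
        Finset.sum_congr rfl fun v hv =>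
          by rw [Function.update_of_ne (ne_of_mem_of_not_mem hv ha)]
      rw [this, ← hcy]
      abel
end Basics

section FM
variable {V : Type*} [AddCommGroup V] [Module ℚ V]

variable {V : Type*} [AddCommGroup V] [Module ℚ V]

lemma le_foldr_max (l : List ℚ) (b : ℚ) : b ≤ l.foldr max b := by
  induction l with
  | nil => simp
  | cons a l ih => exact le_max_of_le_right ih

lemma mem_le_foldr_max {l : List ℚ} {y : ℚ} (b : ℚ) (hy : y ∈ l) : y ≤ l.foldr max b := by
  induction l with
  | nil => simp at hy
  | cons a l ih =>
    rcases List.mem_cons.1 hy with rfl | h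
    · exact le_max_left _ _
    · exact le_max_of_le_right (ih h)

lemma foldr_max_le {l : List ℚ} {b c : ℚ} (hb : b ≤ c) (h : ∀ y ∈ l, y ≤ c) :
    l.foldr max b ≤ c := by
  induction l with
  | nil => simpa
  | cons a l ih =>
    exact max_le (h a (by simp)) (ih fun y hy => h y (List.mem_cons_of_mem _ hy))

end FM

section Weyl
variable {N : ℕ}
local notation "V" => Fin N → ℚ

theorem exists_H_rep (T : Finset V) :
    ∃ L : List (V →ₗ[ℚ] ℚ), ConeGen (↑T : Set V) = {x | ∀ ℓ ∈ L, 0 ≤ ℓ x} := by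
  classical
  induction T using Finset.induction_on with
  | empty =>
    refine ⟨(List.finRange N).flatMap fun i => [LinearMap.proj i, -LinearMap.proj i], ?_⟩
    ext x
    simp only [Set.mem_setOf_eq, List.mem_flatMap, List.mem_finRange]
    constructor
    · rintro ⟨s, c, hs, hc, rfl⟩
      have : s = ∅ := Finset.subset_empty.1 (fun v hv => by simpa using hs hv)
      subst this
      simp
    · intro h
      have hx : x = 0 := by
        funext i
        have h1 := h (LinearMap.proj i) ⟨i, trivial, by simp⟩
        have h2 := h (-LinearMap.proj i) ⟨i, trivial, by simp⟩
        simp only [LinearMap.proj_apply, LinearMap.neg_apply, Left.nonneg_neg_iff] at h1 h2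
        exact le_antisymm h2 h1
      exact hx ▸ ⟨∅, 0, by simp, by simp, by simp⟩
  | @insert a S ha ih =>
    obtain ⟨L, hL⟩ := ih
    refine ⟨(L.filter fun ℓ => 0 ≤ ℓ a) ++
      (L.flatMap fun ℓ => if ℓ a < 0 then
        L.filterMap (fun ℓ' => if 0 < ℓ' a then some ((ℓ' a) • ℓ - (ℓ a) • ℓ') else none)
        else []), ?_⟩
    ext x
    simp only [Set.mem_setOf_eq, List.mem_append]
    rw [mem_coneGen_insert ha]
    have hmemσS : ∀ y, y ∈ ConeGen (↑S : Set V) ↔ ∀ ℓ ∈ L, 0 ≤ ℓ y := by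
      intro y; rw [hL]; rfl
    constructor
    · rintro ⟨t, ht, hy⟩
      rw [hmemσS] at hy
      intro ℓ' hℓ'
      rcases hℓ' with h1 | h2
      · rw [List.mem_filter] at h1
        obtain ⟨hmem, hpos⟩ := h1
        have := hy ℓ' hmem
        rw [map_sub, map_smul, smul_eq_mul] at this
        have hpos' : 0 ≤ ℓ' a := by simpa using hpos
        nlinarith [mul_nonneg ht hpos']
      · rw [List.mem_flatMap] at h2
        obtain ⟨ℓ₁, hℓ₁, hmem⟩ := h2
        by_cases hneg : ℓ₁ a < 0
        · rw [if_pos hneg, List.mem_filterMap] at hmem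
          obtain ⟨ℓ₂, hℓ₂, heq⟩ := hmem
          by_cases hpos : 0 < ℓ₂ a
          · rw [if_pos hpos, Option.some_inj] at heq
            subst heq
            have k1 := hy ℓ₁ hℓ₁
            have k2 := hy ℓ₂ hℓ₂
            rw [map_sub, map_smul, smul_eq_mul] at k1 k2
            simp only [LinearMap.sub_apply, LinearMap.smul_apply, smul_eq_mul, sub_nonneg]
            nlinarith [mul_le_mul_of_nonneg_left k1 hpos.le,
              mul_le_mul_of_nonpos_left k2 hneg.le]
          · rw [if_neg hpos] at heq; exact absurd heq (by simp)
        · rw [if_neg hneg] at hmem; simp at hmem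
    · intro H
      set low := L.filter (fun ℓ => ℓ a < 0) with hlow
      set t := ((low.map fun ℓ => ℓ x / ℓ a).foldr max 0) with htdef
      have ht0 : 0 ≤ t := le_foldr_max _ _
      refine ⟨t, ht0, ?_⟩
      rw [hmemσS]
      intro ℓ hℓ
      rw [map_sub, map_smul, smul_eq_mul, sub_nonneg]
      rcases lt_trichotomy (ℓ a) 0 with hlt | heq | hpos
      · have hmm : ℓ x / ℓ a ≤ t :=
          mem_le_foldr_max _ (List.mem_map.2 ⟨ℓ, List.mem_filter.2 ⟨hℓ, by simpa using hlt⟩, rfl⟩)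
        rw [div_le_iff_of_neg hlt] at hmm
        linarith
      · have h1 : 0 ≤ ℓ x := H ℓ (Or.inl (List.mem_filter.2 ⟨hℓ, by simp [heq]⟩))
        rw [heq]; linarith
      · have h1 : 0 ≤ ℓ x := H ℓ (Or.inl (List.mem_filter.2 ⟨hℓ, by simpa using hpos.le⟩))
        have ht : t ≤ ℓ x / ℓ a := by
          refine foldr_max_le (div_nonneg h1 hpos.le) ?_
          intro y hy
          rw [List.mem_map] at hy
          obtain ⟨ℓ₁, hℓ₁m, rfl⟩ := hy
          rw [hlow, List.mem_filter] at hℓ₁m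
          obtain ⟨hℓ₁L, hℓ₁a⟩ := hℓ₁m
          have hℓ₁a : ℓ₁ a < 0 := by simpa using hℓ₁a
          have hcombo : 0 ≤ ((ℓ a) • ℓ₁ - (ℓ₁ a) • ℓ) x := by
            refine H _ (Or.inr ?_)
            rw [List.mem_flatMap]
            refine ⟨ℓ₁, hℓ₁L, ?_⟩
            rw [if_pos hℓ₁a, List.mem_filterMap]
            exact ⟨ℓ, hℓ, by rw [if_pos hpos]⟩
          simp only [LinearMap.sub_apply, LinearMap.smul_apply, smul_eq_mul, sub_nonneg] at hcombo
          rw [div_le_iff_of_neg hℓ₁a, div_mul_eq_mul_div, div_le_iff₀ hpos]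
          linarith
        rw [le_div_iff₀ hpos] at ht
        linarith

end Weyl

section Faces
variable {V : Type*} [AddCommGroup V] [Module ℚ V]

lemma IsFace.subset {σ τ : Set V} (h : IsFace σ τ) : τ ⊆ σ := by
  obtain ⟨m, _, rfl⟩ := h; exact Set.inter_subset_left

lemma isFace_self (σ : Set V) : IsFace σ σ :=
  ⟨0, by simp, by simp⟩

lemma isFace_of_subface {σ F τ : Set V} (hF : IsFace σ F) (hτ : IsFace σ τ) (hτF : τ ⊆ F) :
    IsFace F τ := by
  obtain ⟨m, hm, hτe⟩ := hτ
  refine ⟨m, fun x hx => hm x (hF.subset hx), ?_⟩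
  apply Set.Subset.antisymm
  · intro x hx
    exact ⟨hτF hx, (hτe ▸ hx).2⟩
  · intro x hx
    rw [hτe]
    exact ⟨hF.subset hx.1, hx.2⟩

/-- A face of a finitely generated cone is generated by the generators on which
the supporting functional vanishes. -/
lemma face_eq_coneGen_filter [DecidableEq V] (T : Finset V) (m : V →ₗ[ℚ] ℚ)
    (hm : ∀ x ∈ ConeGen (↑T : Set V), 0 ≤ m x) :
    ConeGen (↑T : Set V) ∩ {x | m x = 0} =
      ConeGen (↑(T.filter fun v => m v = 0) : Set V) := by
  apply Set.Subset.antisymm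
  · rintro x ⟨hx, hx0⟩
    rw [mem_coneGen_iff] at hx
    obtain ⟨c, hc, rfl⟩ := hx
    have hmx : ∑ v ∈ T, c v * m v = 0 := by
      simpa [map_sum, map_smul, smul_eq_mul] using hx0
    have hterm : ∀ v ∈ T, c v * m v = 0 := by
      rw [← Finset.sum_eq_zero_iff_of_nonneg]
      · exact hmx
      · intro v hv
        exact mul_nonneg (hc v) (hm v (subset_coneGen _ (by exact_mod_cast hv)))
    rw [mem_coneGen_iff]
    refine ⟨c, hc, ?_⟩
    rw [Finset.sum_filter_of_ne]
    intro v hv hne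
    by_contra hmv
    have hcv : c v = 0 := by
      rcases mul_eq_zero.1 (hterm v hv) with h | h
      · exact h
      · exact absurd h hmv
    exact hne (by rw [hcv, zero_smul])
  · intro x hx
    have hsub : (↑(T.filter fun v => m v = 0) : Set V) ⊆ ↑T := by
      intro v hv
      simp only [Finset.coe_filter, Set.mem_setOf_eq] at hv
      exact_mod_cast hv.1
    refine ⟨coneGen_mono hsub hx, ?_⟩
    rw [mem_coneGen_iff] at hx
    obtain ⟨c, hc, rfl⟩ := hx
    simp only [Set.mem_setOf_eq, map_sum, map_smul, smul_eq_mul]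
    apply Finset.sum_eq_zero
    intro v hv
    simp only [Finset.mem_filter] at hv
    rw [hv.2, mul_zero]

/-- Transitivity: a face of a face of a finitely generated cone is a face of the cone. -/
lemma isFace_trans (T : Finset V) {τ ρ : Set V}
    (hτ : IsFace (ConeGen (↑T : Set V)) τ) (hρ : IsFace τ ρ) :
    IsFace (ConeGen (↑T : Set V)) ρ := by
  classical
  obtain ⟨m, hm, hτe⟩ := hτ
  obtain ⟨m', hm', hρe⟩ := hρ
  set σ : Set V := ConeGen (↑T : Set V) with hσdef
  have hTσ : ∀ v ∈ T, v ∈ σ := fun v hv => subset_coneGen _ (by exact_mod_cast hv)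
  set C : ℚ := 1 + ∑ v ∈ T, max 0 (-(m' v) / m v) with hC
  have hCv : ∀ v ∈ T, 0 < m v → 0 < m' v + C * m v := by
    intro v hv hmv
    have h1 : max 0 (-(m' v) / m v) ≤ ∑ w ∈ T, max 0 (-(m' w) / m w) :=
      Finset.single_le_sum (f := fun w => max 0 (-(m' w) / m w)) (fun w _ => le_max_left _ _) hv
    have h2 : -(m' v) / m v < C := by
      have := le_max_right 0 (-(m' v) / m v)
      rw [hC]; linarith
    rw [div_lt_iff₀ hmv] at h2
    nlinarith
  set m'' : V →ₗ[ℚ] ℚ := m' + C • m with hm''def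
  have hm''v : ∀ v ∈ T, 0 ≤ m'' v := by
    intro v hv
    have hv0 : 0 ≤ m v := hm v (hTσ v hv)
    rcases eq_or_lt_of_le hv0 with heq | hlt
    · have hvτ : v ∈ τ := hτe ▸ ⟨hTσ v hv, by simp [← heq]⟩
      have := hm' v hvτ
      simp only [hm''def, LinearMap.add_apply, LinearMap.smul_apply, smul_eq_mul]
      rw [← heq]; linarith
    · have := hCv v hv hlt
      simp only [hm''def, LinearMap.add_apply, LinearMap.smul_apply, smul_eq_mul]
      linarith
  have key : ∀ x ∈ σ, ∃ c : V → ℚ, (∀ v, 0 ≤ c v) ∧ x = ∑ v ∈ T, c v • v := by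
    intro x hx; exact mem_coneGen_iff.1 hx
  refine ⟨m'', ?_, ?_⟩
  · intro x hx
    obtain ⟨c, hc, rfl⟩ := key x hx
    simp only [map_sum, map_smul, smul_eq_mul]
    exact Finset.sum_nonneg fun v hv => mul_nonneg (hc v) (hm''v v hv)
  · apply Set.Subset.antisymm
    · intro x hx
      have hxτ : x ∈ τ := hρe ▸ hx |>.1
      have hxm' : m' x = 0 := (hρe ▸ hx).2
      have hxσ : x ∈ σ := (hτe ▸ hxτ).1
      have hxm : m x = 0 := (hτe ▸ hxτ).2
      refine ⟨hxσ, ?_⟩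
      simp only [Set.mem_setOf_eq, hm''def, LinearMap.add_apply, LinearMap.smul_apply,
        smul_eq_mul, hxm', hxm, mul_zero, add_zero]
    · rintro x ⟨hxσ, hx0⟩
      obtain ⟨c, hc, rfl⟩ := key x hxσ
      have hsum : ∑ v ∈ T, c v * m'' v = 0 := by
        simpa [map_sum, map_smul, smul_eq_mul] using (hx0 : m'' _ = 0)
      have hterm : ∀ v ∈ T, c v * m'' v = 0 := by
        rw [← Finset.sum_eq_zero_iff_of_nonneg]
        · exact hsum
        · exact fun v hv => mul_nonneg (hc v) (hm''v v hv)
      have hvanish : ∀ v ∈ T, c v ≠ 0 → m v = 0 ∧ m' v = 0 := by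
        intro v hv hcv
        have h0 : m'' v = 0 := by
          rcases mul_eq_zero.1 (hterm v hv) with h | h
          · exact absurd h hcv
          · exact h
        have hv0 : 0 ≤ m v := hm v (hTσ v hv)
        rcases eq_or_lt_of_le hv0 with heq | hlt
        · refine ⟨heq.symm, ?_⟩
          simp only [hm''def, LinearMap.add_apply, LinearMap.smul_apply, smul_eq_mul] at h0
          rw [← heq] at h0; linarith
        · exact absurd h0 (ne_of_gt (by
            have := hCv v hv hlt
            simp only [hm''def, LinearMap.add_apply, LinearMap.smul_apply, smul_eq_mul]
            linarith))
      have hxm : m (∑ v ∈ T, c v • v) = 0 := by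
        simp only [map_sum, map_smul, smul_eq_mul]
        apply Finset.sum_eq_zero
        intro v hv
        by_cases hcv : c v = 0
        · rw [hcv, zero_mul]
        · rw [(hvanish v hv hcv).1, mul_zero]
      have hxm' : m' (∑ v ∈ T, c v • v) = 0 := by
        simp only [map_sum, map_smul, smul_eq_mul]
        apply Finset.sum_eq_zero
        intro v hv
        by_cases hcv : c v = 0
        · rw [hcv, zero_mul]
        · rw [(hvanish v hv hcv).2, mul_zero]
      have hxτ : (∑ v ∈ T, c v • v) ∈ τ := hτe ▸ ⟨hxσ, hxm⟩
      rw [hρe]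
      exact ⟨hxτ, hxm'⟩

end Faces

section Helpers
variable {V : Type*} [AddCommGroup V] [Module ℚ V]

lemma exists_list_argmin {α : Type*} (f : α → ℚ) :
    ∀ (l : List α), l ≠ [] → ∃ a ∈ l, ∀ b ∈ l, f a ≤ f b := by
  intro l
  induction l with
  | nil => intro h; exact absurd rfl h
  | cons a l ih =>
    intro _
    rcases eq_or_ne l [] with rfl | hne
    · exact ⟨a, by simp, by simp⟩
    · obtain ⟨m, hm, hmin⟩ := ih hne
      rcases le_total (f a) (f m) with h | h
      · exact ⟨a, by simp, fun b hb => by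
          rcases List.mem_cons.1 hb with rfl | hb
          · exact le_refl _
          · exact h.trans (hmin b hb)⟩
      · exact ⟨m, List.mem_cons_of_mem _ hm, fun b hb => by
          rcases List.mem_cons.1 hb with rfl | hb
          · exact h
          · exact hmin b hb⟩

lemma exists_point_pos (τ : Set V) (h0 : (0 : V) ∈ τ)
    (hadd : ∀ x ∈ τ, ∀ y ∈ τ, x + y ∈ τ) :
    ∀ (M : List (V →ₗ[ℚ] ℚ)), (∀ ℓ ∈ M, ∀ x ∈ τ, 0 ≤ ℓ x) →
      (∀ ℓ ∈ M, ∃ x ∈ τ, 0 < ℓ x) → ∃ x ∈ τ, ∀ ℓ ∈ M, 0 < ℓ x := by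
  intro M
  induction M with
  | nil => exact fun _ _ => ⟨0, h0, by simp⟩
  | cons ℓ M ih =>
    intro hnn hex
    obtain ⟨y, hy, hys⟩ := ih (fun ℓ' h => hnn ℓ' (List.mem_cons_of_mem _ h))
      (fun ℓ' h => hex ℓ' (List.mem_cons_of_mem _ h))
    obtain ⟨x, hx, hxp⟩ := hex ℓ (by simp)
    refine ⟨x + y, hadd x hx y hy, fun ℓ' hℓ' => ?_⟩
    rcases List.mem_cons.1 hℓ' with rfl | hℓ'
    · have := hnn ℓ' (by simp) y hy
      rw [map_add]; linarith
    · have h1 := hys ℓ' hℓ'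
      have h2 := hnn ℓ' (List.mem_cons_of_mem _ hℓ') x hx
      rw [map_add]; linarith

lemma exists_eps_bound (x w : V) :
    ∀ (M : List (V →ₗ[ℚ] ℚ)), (∀ ℓ ∈ M, 0 < ℓ x) →
      ∃ ε : ℚ, 0 < ε ∧ ∀ ℓ ∈ M, ε * |ℓ w| < ℓ x := by
  intro M
  induction M with
  | nil => exact fun _ => ⟨1, one_pos, by simp⟩
  | cons ℓ M ih =>
    intro hpos
    obtain ⟨ε, hε, hall⟩ := ih (fun ℓ' h => hpos ℓ' (List.mem_cons_of_mem _ h))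
    have hx : 0 < ℓ x := hpos ℓ (by simp)
    have hden : (0:ℚ) < 2 * (|ℓ w| + 1) := by positivity
    refine ⟨min ε (ℓ x / (2 * (|ℓ w| + 1))), lt_min hε (by positivity), ?_⟩
    intro ℓ' hℓ'
    rcases List.mem_cons.1 hℓ' with rfl | hℓ'
    · have h1 : min ε (ℓ' x / (2 * (|ℓ' w| + 1))) * |ℓ' w| ≤
          (ℓ' x / (2 * (|ℓ' w| + 1))) * |ℓ' w| :=
        mul_le_mul_of_nonneg_right (min_le_right _ _) (abs_nonneg _)
      have h2 : (ℓ' x / (2 * (|ℓ' w| + 1))) * |ℓ' w| < ℓ' x := by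
        rw [div_mul_eq_mul_div, div_lt_iff₀ hden]
        nlinarith [abs_nonneg (ℓ' w)]
      linarith
    · have h1 : min ε (ℓ x / (2 * (|ℓ w| + 1))) * |ℓ' w| ≤ ε * |ℓ' w| :=
        mul_le_mul_of_nonneg_right (min_le_left _ _) (abs_nonneg _)
      exact lt_of_le_of_lt h1 (hall ℓ' hℓ')

lemma shift_pos {x w : V} {ε : ℚ} {ℓ : V →ₗ[ℚ] ℚ} (hε : 0 < ε)
    (h : ε * |ℓ w| < ℓ x) : 0 < ℓ (x + ε • w) ∧ 0 < ℓ (x - ε • w) := by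
  have h1 : |ε * ℓ w| = ε * |ℓ w| := by rw [abs_mul, abs_of_pos hε]
  have h2 : -(ε * |ℓ w|) ≤ ε * ℓ w ∧ ε * ℓ w ≤ ε * |ℓ w| := by
    constructor
    · rw [← h1]; exact neg_abs_le _
    · rw [← h1]; exact le_abs_self _
  constructor
  · rw [map_add, map_smul, smul_eq_mul]; linarith [h2.1]
  · rw [map_sub, map_smul, smul_eq_mul]; linarith [h2.2]

end Helpers

section Facet
variable {V : Type*} [AddCommGroup V] [Module ℚ V]

/-- Auxiliary: the polyhedron cut out inside a subspace by a list of functionals. -/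
def Pset (V₀ : Submodule ℚ V) (M : List (V →ₗ[ℚ] ℚ)) : Set V :=
  {x | x ∈ V₀ ∧ ∀ ℓ ∈ M, 0 ≤ ℓ x}

lemma Pset_anti {V₀ : Submodule ℚ V} {M M' : List (V →ₗ[ℚ] ℚ)} (h : ∀ ℓ ∈ M', ℓ ∈ M) :
    Pset V₀ M ⊆ Pset V₀ M' :=
  fun x hx => ⟨hx.1, fun ℓ hℓ => hx.2 ℓ (h ℓ hℓ)⟩

/-- The relaxed polyhedron where one functional `ℓ` of `M` is dropped. -/
def Qset (V₀ : Submodule ℚ V) (M : List (V →ₗ[ℚ] ℚ)) (ℓ : V →ₗ[ℚ] ℚ) : Set V :=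
  {x | x ∈ V₀ ∧ ∀ ℓ' ∈ M, ℓ' ≠ ℓ → 0 ≤ ℓ' x}

lemma exists_minimal_subrep (V₀ : Submodule ℚ V) (σ : Set V) :
    ∀ (k : ℕ) (M : List (V →ₗ[ℚ] ℚ)), M.length ≤ k → σ = Pset V₀ M →
      ∃ M' : List (V →ₗ[ℚ] ℚ), (∀ ℓ ∈ M', ℓ ∈ M) ∧ σ = Pset V₀ M' ∧
        ∀ ℓ ∈ M', σ ≠ Qset V₀ M' ℓ := by
  classical
  intro k
  induction k with
  | zero =>
    intro M hlen hM
    have : M = [] := List.eq_nil_of_length_eq_zero (Nat.le_zero.1 hlen)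
    subst this
    exact ⟨[], by simp, hM, by simp⟩
  | succ k ih =>
    intro M hlen hM
    by_cases h : ∀ ℓ ∈ M, σ ≠ Qset V₀ M ℓ
    · exact ⟨M, fun _ h => h, hM, h⟩
    · push_neg at h
      obtain ⟨ℓ, hℓ, heq⟩ := h
      set M₁ := M.filter (fun a => a ≠ ℓ) with hM₁
      have hlt : M₁.length < M.length := by
        rw [hM₁]
        refine List.length_filter_lt_length_iff_exists.2 ?_
        exact ⟨ℓ, hℓ, by simp⟩
      have heq' : σ = Pset V₀ M₁ := by
        rw [heq]
        ext x
        simp only [Qset, Pset, Set.mem_setOf_eq, hM₁, List.mem_filter, decide_eq_true_eq,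
          and_imp]
      obtain ⟨M', hsub, hM', hmin⟩ := ih M₁ (by omega) heq'
      refine ⟨M', fun ℓ' h' => ?_, hM', hmin⟩
      have := hsub ℓ' h'
      rw [hM₁, List.mem_filter] at this
      exact this.1

end Facet

section FinrankKer
variable {V : Type*} [AddCommGroup V] [Module ℚ V] [FiniteDimensional ℚ V]

lemma finrank_inf_ker (W : Submodule ℚ V) (f : V →ₗ[ℚ] ℚ) {x : V} (hx : x ∈ W)
    (hfx : f x ≠ 0) :
    Module.finrank ℚ (W ⊓ LinearMap.ker f : Submodule ℚ V) + 1 = Module.finrank ℚ W := by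
  set g : W →ₗ[ℚ] ℚ := f.domRestrict W with hg
  have h1 : (LinearMap.ker g).map W.subtype = W ⊓ LinearMap.ker f := by
    ext y
    simp only [Submodule.mem_map, LinearMap.mem_ker, Submodule.mem_inf, hg,
      LinearMap.domRestrict_apply, Submodule.coe_subtype]
    constructor
    · rintro ⟨⟨z, hz⟩, hz0, rfl⟩
      exact ⟨hz, hz0⟩
    · rintro ⟨hy, hy0⟩
      exact ⟨⟨y, hy⟩, hy0, rfl⟩
  have h2 : Module.finrank ℚ (W ⊓ LinearMap.ker f : Submodule ℚ V) =
      Module.finrank ℚ (LinearMap.ker g) := by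
    rw [← h1, Submodule.finrank_map_subtype_eq]
  have h3 : LinearMap.range g = ⊤ := by
    rw [LinearMap.range_eq_top]
    intro c
    refine ⟨(c / f x) • ⟨x, hx⟩, ?_⟩
    simp only [hg, LinearMap.domRestrict_apply, map_smul, Submodule.coe_smul_of_tower,
      smul_eq_mul]
    field_simp
  have h4 := LinearMap.finrank_range_add_finrank_ker g
  rw [h3] at h4
  simp only [finrank_top, Module.finrank_self] at h4
  omega

end FinrankKer

section FacetMain
variable {N : ℕ}

open Module Submodule in
/-- Every proper face of a finitely generated cone is contained in a facet. -/
lemma exists_facet (T : Finset (Fin N → ℚ)) {τ : Set (Fin N → ℚ)}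
    (hτ : IsFace (ConeGen (↑T : Set (Fin N → ℚ))) τ) (hne : τ ≠ ConeGen (↑T : Set (Fin N → ℚ))) :
    ∃ F, IsFace (ConeGen (↑T : Set (Fin N → ℚ))) F ∧ τ ⊆ F ∧
      coneDim F + 1 = coneDim (ConeGen (↑T : Set (Fin N → ℚ))) := by
  classical
  set σ : Set (Fin N → ℚ) := ConeGen (↑T : Set (Fin N → ℚ)) with hσdef
  obtain ⟨m, hm, hτe⟩ := hτ
  obtain ⟨L, hL⟩ := exists_H_rep T
  have hσL : ∀ x, x ∈ σ ↔ ∀ ℓ ∈ L, 0 ≤ ℓ x := fun x => by rw [hσdef, hL]; rfl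
  set V₀ : Submodule ℚ (Fin N → ℚ) := Submodule.span ℚ σ with hV₀
  have hTσ : ∀ v ∈ T, v ∈ σ := fun v hv => subset_coneGen _ (by exact_mod_cast hv)
  have hσV₀ : ∀ x ∈ σ, x ∈ V₀ := fun x hx => Submodule.subset_span hx
  -- restrict to the essential inequalities
  set L₀ : List ((Fin N → ℚ) →ₗ[ℚ] ℚ) := L.filter (fun ℓ => decide (∃ v ∈ T, 0 < ℓ v)) with hL₀
  have hPL₀ : σ = Pset V₀ L₀ := by
    ext x
    constructor
    · intro hx
      exact ⟨hσV₀ x hx, fun ℓ hℓ => (hσL x).1 hx ℓ (List.mem_filter.1 hℓ).1⟩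
    · rintro ⟨hxV, hxL⟩
      rw [hσL]
      intro ℓ hℓ
      by_cases hmem : ∃ v ∈ T, 0 < ℓ v
      · exact hxL ℓ (List.mem_filter.2 ⟨hℓ, by simpa using hmem⟩)
      · push_neg at hmem
        have hker : ∀ v ∈ T, ℓ v = 0 := fun v hv =>
          le_antisymm (hmem v hv) ((hσL v).1 (hTσ v hv) ℓ hℓ)
        have hspan : V₀ ≤ LinearMap.ker ℓ := by
          rw [hV₀, hσdef, span_coneGen, Submodule.span_le]
          intro v hv
          rw [SetLike.mem_coe, LinearMap.mem_ker]
          exact hker v (by exact_mod_cast hv)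
        have : ℓ x = 0 := hspan hxV
        rw [this]
    -- done
  obtain ⟨M, hML₀, hPM, hMmin⟩ :=
    exists_minimal_subrep V₀ σ L₀.length L₀ le_rfl hPL₀
  have hML : ∀ ℓ ∈ M, ℓ ∈ L := fun ℓ h => (List.mem_filter.1 (hML₀ ℓ h)).1
  have hMpos : ∀ ℓ ∈ M, ∃ v ∈ T, 0 < ℓ v := fun ℓ h => by
    simpa using (List.mem_filter.1 (hML₀ ℓ h)).2
  -- the interior point x⁰
  set x0 : Fin N → ℚ := ∑ v ∈ T, v with hx0def
  have hx0σ : x0 ∈ σ := mem_coneGen_iff.2 ⟨fun _ => 1, fun _ => zero_le_one, by simp [hx0def]⟩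
  have hx0 : ∀ ℓ ∈ M, 0 < ℓ x0 := by
    intro ℓ hℓ
    obtain ⟨v, hv, hvpos⟩ := hMpos ℓ hℓ
    rw [hx0def, map_sum]
    exact Finset.sum_pos' (fun w hw => (hσL w).1 (hTσ w hw) ℓ (hML ℓ hℓ)) ⟨v, hv, hvpos⟩
  -- a generator with positive m-value
  have hvplus : ∃ v ∈ T, 0 < m v := by
    by_contra h
    push_neg at h
    have hker : ∀ v ∈ T, m v = 0 := fun v hv => le_antisymm (h v hv) (hm v (hTσ v hv))
    apply hne
    rw [hτe]
    apply Set.Subset.antisymm Set.inter_subset_left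
    intro x hx
    refine ⟨hx, ?_⟩
    obtain ⟨c, hc, rfl⟩ := mem_coneGen_iff.1 hx
    simp only [Set.mem_setOf_eq, map_sum, map_smul, smul_eq_mul]
    exact Finset.sum_eq_zero fun v hv => by rw [hker v hv, mul_zero]
  obtain ⟨vp, hvpT, hvpm⟩ := hvplus
  -- τ is closed under addition and contains 0
  have hτ0 : (0 : Fin N → ℚ) ∈ τ := by
    rw [hτe]; exact ⟨zero_mem_coneGen _, by simp⟩
  have hτadd : ∀ x ∈ τ, ∀ y ∈ τ, x + y ∈ τ := by
    intro x hx y hy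
    rw [hτe] at hx hy ⊢
    exact ⟨add_mem_coneGen hx.1 hy.1, by
      simp only [Set.mem_setOf_eq, map_add]
      have := hx.2; have := hy.2
      simp only [Set.mem_setOf_eq] at *
      linarith⟩
  -- find a functional in M vanishing on τ
  have hlstar : ∃ ℓs ∈ M, ∀ x ∈ τ, ℓs x = 0 := by
    by_contra h
    push_neg at h
    have hex : ∀ ℓ ∈ M, ∃ x ∈ τ, 0 < ℓ x := by
      intro ℓ hℓ
      obtain ⟨x, hx, hxne⟩ := h ℓ hℓ
      exact ⟨x, hx, lt_of_le_of_ne ((hσL x).1 (hτe ▸ hx).1 ℓ (hML ℓ hℓ)) (Ne.symm hxne)⟩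
    obtain ⟨xb, hxbτ, hxbpos⟩ := exists_point_pos τ hτ0 hτadd M
      (fun ℓ hℓ x hx => (hσL x).1 (hτe ▸ hx).1 ℓ (hML ℓ hℓ)) hex
    obtain ⟨ε, hε, hεall⟩ := exists_eps_bound xb vp M hxbpos
    have hyσ : xb - ε • vp ∈ σ := by
      rw [hPM]
      refine ⟨Submodule.sub_mem _ (hσV₀ xb (hτe ▸ hxbτ).1) (Submodule.smul_mem _ _ (hσV₀ vp (hTσ vp hvpT))), ?_⟩
      intro ℓ hℓ
      exact le_of_lt (shift_pos hε (hεall ℓ hℓ)).2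
    have h1 : m (xb - ε • vp) < 0 := by
      have hxbm : m xb = 0 := (hτe ▸ hxbτ).2
      rw [map_sub, map_smul, smul_eq_mul, hxbm]
      nlinarith
    exact absurd (hm _ hyσ) (not_le.2 h1)
  obtain ⟨ℓs, hℓsM, hℓsτ⟩ := hlstar
  -- the complement list
  set M' : List ((Fin N → ℚ) →ₗ[ℚ] ℚ) := M.filter (fun a => a ≠ ℓs) with hM'
  have hM'M : ∀ ℓ ∈ M', ℓ ∈ M := fun ℓ h => (List.mem_filter.1 h).1
  have hM'ne : ∀ ℓ ∈ M', ℓ ≠ ℓs := fun ℓ h => by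
    simpa using (List.mem_filter.1 h).2
  have hMcases : ∀ ℓ ∈ M, ℓ = ℓs ∨ ℓ ∈ M' := by
    intro ℓ hℓ
    by_cases h : ℓ = ℓs
    · exact Or.inl h
    · exact Or.inr (List.mem_filter.2 ⟨hℓ, by simpa using h⟩)
  -- a point violating only ℓs
  have hy : ∃ y, y ∈ V₀ ∧ (∀ ℓ ∈ M', 0 ≤ ℓ y) ∧ ℓs y < 0 := by
    have hQ : σ ≠ Qset V₀ M ℓs := hMmin ℓs hℓsM
    have hσQ : σ ⊆ Qset V₀ M ℓs := by
      rw [hPM]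
      exact fun x hx => ⟨hx.1, fun ℓ' hℓ' _ => hx.2 ℓ' hℓ'⟩
    have : ∃ y ∈ Qset V₀ M ℓs, y ∉ σ := by
      by_contra h
      push_neg at h
      exact hQ (Set.Subset.antisymm hσQ h)
    obtain ⟨y, hyQ, hyσ⟩ := this
    refine ⟨y, hyQ.1, fun ℓ hℓ => hyQ.2 ℓ (hM'M ℓ hℓ) (hM'ne ℓ hℓ), ?_⟩
    by_contra h
    push_neg at h
    apply hyσ
    rw [hPM]
    refine ⟨hyQ.1, fun ℓ hℓ => ?_⟩
    rcases hMcases ℓ hℓ with rfl | hmem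
    · exact h
    · exact hyQ.2 ℓ hℓ (hM'ne ℓ hmem)
  obtain ⟨y, hyV₀, hyM', hyneg⟩ := hy
  -- the crossing point z
  set p : ℚ := ℓs x0 with hp
  set q : ℚ := ℓs y with hq
  have hppos : 0 < p := hx0 ℓs hℓsM
  have hqneg : q < 0 := hyneg
  have hpq : 0 < p - q := by linarith
  set s : ℚ := p / (p - q) with hs
  have hspos : 0 < s := div_pos hppos hpq
  have hslt : s < 1 := by
    rw [hs, div_lt_one hpq]; linarith
  set z : Fin N → ℚ := x0 + s • (y - x0) with hz
  have hzs : ℓs z = 0 := by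
    rw [hz]
    simp only [map_add, map_smul, map_sub, smul_eq_mul]
    rw [← hp, ← hq, hs]
    field_simp
    ring
  have hzM' : ∀ ℓ ∈ M', 0 < ℓ z := by
    intro ℓ hℓ
    rw [hz]
    simp only [map_add, map_smul, map_sub, smul_eq_mul]
    have h1 : 0 < ℓ x0 := hx0 ℓ (hM'M ℓ hℓ)
    have h2 : 0 ≤ ℓ y := hyM' ℓ hℓ
    nlinarith
  have hzV₀ : z ∈ V₀ := by
    rw [hz]
    exact Submodule.add_mem _ (hσV₀ x0 hx0σ)
      (Submodule.smul_mem _ _ (Submodule.sub_mem _ hyV₀ (hσV₀ x0 hx0σ)))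
  have hzσ : z ∈ σ := by
    rw [hPM]
    refine ⟨hzV₀, fun ℓ hℓ => ?_⟩
    rcases hMcases ℓ hℓ with rfl | hmem
    · rw [hzs]
    · exact le_of_lt (hzM' ℓ hmem)
  -- the facet
  refine ⟨σ ∩ {x | ℓs x = 0}, ⟨ℓs, fun x hx => (hσL x).1 hx ℓs (hML ℓs hℓsM), rfl⟩,
    fun x hx => ⟨(hτe ▸ hx).1, hℓsτ x hx⟩, ?_⟩
  have hspan : Submodule.span ℚ (σ ∩ {x | ℓs x = 0}) = V₀ ⊓ LinearMap.ker ℓs := by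
    apply le_antisymm
    · rw [Submodule.span_le]
      rintro x ⟨hxσ, hx0'⟩
      exact ⟨hσV₀ x hxσ, hx0'⟩
    · intro w hw
      rw [Submodule.mem_inf] at hw
      obtain ⟨hwV₀, hwker'⟩ := hw
      have hwker : ℓs w = 0 := hwker'
      obtain ⟨ε, hε, hεall⟩ := exists_eps_bound z w M' hzM'
      have hzwσ : z + ε • w ∈ σ := by
        rw [hPM]
        refine ⟨Submodule.add_mem _ hzV₀ (Submodule.smul_mem _ _ hwV₀), fun ℓ hℓ => ?_⟩
        rcases hMcases ℓ hℓ with rfl | hmem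
        · rw [map_add, map_smul, hzs, hwker, smul_eq_mul, mul_zero, add_zero]
        · exact le_of_lt (shift_pos hε (hεall ℓ hmem)).1
      have hz1 : z + ε • w ∈ σ ∩ {x | ℓs x = 0} := by
        refine ⟨hzwσ, ?_⟩
        simp only [Set.mem_setOf_eq, map_add, map_smul, hzs, hwker, smul_eq_mul, mul_zero,
          add_zero]
      have hz2 : z ∈ σ ∩ {x | ℓs x = 0} := ⟨hzσ, hzs⟩
      have : w = ε⁻¹ • ((z + ε • w) - z) := by
        rw [add_sub_cancel_left, smul_smul, inv_mul_cancel₀ (ne_of_gt hε), one_smul]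
      rw [this]
      exact Submodule.smul_mem _ _ (Submodule.sub_mem _
        (Submodule.subset_span hz1) (Submodule.subset_span hz2))
  have hℓsx0 : ℓs x0 ≠ 0 := ne_of_gt hppos
  have := finrank_inf_ker V₀ ℓs (hσV₀ x0 hx0σ) hℓsx0
  unfold coneDim
  rw [hspan, ← hV₀]
  exact this

end FacetMain

section Climb
variable {N : ℕ}

/-- Climbing: any face can be enlarged to a face of any prescribed intermediate dimension. -/
lemma exists_face_of_dim :
    ∀ (d : ℕ) (T : Finset (Fin N → ℚ)) (τ : Set (Fin N → ℚ)) (k : ℕ),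
      coneDim (ConeGen (↑T : Set (Fin N → ℚ))) ≤ d →
      IsFace (ConeGen (↑T : Set (Fin N → ℚ))) τ → coneDim τ ≤ k →
      k ≤ coneDim (ConeGen (↑T : Set (Fin N → ℚ))) →
      ∃ τ₁, IsFace (ConeGen (↑T : Set (Fin N → ℚ))) τ₁ ∧ τ ⊆ τ₁ ∧ coneDim τ₁ = k := by
  classical
  intro d
  induction d with
  | zero =>
    intro T τ k hd hτ hk1 hk2
    have hk : k = coneDim (ConeGen (↑T : Set (Fin N → ℚ))) := by omega
    exact ⟨_, isFace_self _, hτ.subset, hk.symm⟩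
  | succ d ih =>
    intro T τ k hd hτ hk1 hk2
    by_cases hk : k = coneDim (ConeGen (↑T : Set (Fin N → ℚ)))
    · exact ⟨_, isFace_self _, hτ.subset, hk.symm⟩
    · have hklt : k < coneDim (ConeGen (↑T : Set (Fin N → ℚ))) := lt_of_le_of_ne hk2 hk
      have hτne : τ ≠ ConeGen (↑T : Set (Fin N → ℚ)) := by
        intro h
        rw [h] at hk1
        omega
      obtain ⟨F, hFface, hτF, hFdim⟩ := exists_facet T ⟨hτ.choose, hτ.choose_spec.1, hτ.choose_spec.2⟩ hτne
      obtain ⟨mF, hmF, hFe⟩ := hFface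
      have hFgen : F = ConeGen (↑(T.filter fun v => mF v = 0) : Set (Fin N → ℚ)) := by
        rw [hFe]
        exact face_eq_coneGen_filter T mF hmF
      have hτFface : IsFace F τ := isFace_of_subface ⟨mF, hmF, hFe⟩ hτ hτF
      have h1 : coneDim F ≤ d := by omega
      have h2 : k ≤ coneDim F := by omega
      rw [hFgen] at hτFface h1 h2
      obtain ⟨τ₁, hτ₁face, hττ₁, hτ₁dim⟩ := ih _ τ k h1 hτFface hk1 h2
      rw [← hFgen] at hτ₁face
      exact ⟨τ₁, isFace_trans T ⟨mF, hmF, hFe⟩ hτ₁face, hττ₁, hτ₁dim⟩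

end Climb

section Descent
variable {N : ℕ}

open Module Submodule in
/-- Moving from a point of a pointed cone along a direction in its span, one can reach a
proper face. -/
lemma exists_smaller_face_through (S : Finset (Fin N → ℚ))
    (hsc : IsStronglyConvex (ConeGen (↑S : Set (Fin N → ℚ))))
    {x v : Fin N → ℚ} (hx : x ∈ ConeGen (↑S : Set (Fin N → ℚ)))
    (hv : v ∈ Submodule.span ℚ (ConeGen (↑S : Set (Fin N → ℚ)))) (hv0 : v ≠ 0) :
    ∃ (τ' : Set (Fin N → ℚ)) (t : ℚ), IsFace (ConeGen (↑S : Set (Fin N → ℚ))) τ' ∧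
      x + t • v ∈ τ' ∧ coneDim τ' < coneDim (ConeGen (↑S : Set (Fin N → ℚ))) := by
  classical
  set ρ : Set (Fin N → ℚ) := ConeGen (↑S : Set (Fin N → ℚ)) with hρdef
  obtain ⟨L, hL⟩ := exists_H_rep S
  have hmem : ∀ y, y ∈ ρ ↔ ∀ ℓ ∈ L, 0 ≤ ℓ y := fun y => by rw [hρdef, hL]; rfl
  -- main work for a direction leaving the cone
  have inner : ∀ w : Fin N → ℚ, (∃ ℓ ∈ L, ℓ w < 0) →
      ∃ (ℓ₀ : (Fin N → ℚ) →ₗ[ℚ] ℚ) (t : ℚ), ℓ₀ ∈ L ∧ ℓ₀ w < 0 ∧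
        x + t • w ∈ ρ ∧ ℓ₀ (x + t • w) = 0 := by
    intro w hw
    set Lneg := L.filter (fun ℓ => ℓ w < 0) with hLneg
    have hne : Lneg ≠ [] := by
      obtain ⟨ℓ, hℓ, hℓw⟩ := hw
      intro h
      have : ℓ ∈ Lneg := List.mem_filter.2 ⟨hℓ, by simpa using hℓw⟩
      rw [h] at this
      simp at this
    obtain ⟨ℓ₀, hℓ₀, hℓ₀min⟩ := exists_list_argmin (fun ℓ => ℓ x / (-(ℓ w))) Lneg hne
    have hℓ₀L : ℓ₀ ∈ L := (List.mem_filter.1 hℓ₀).1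
    have hℓ₀w : ℓ₀ w < 0 := by simpa using (List.mem_filter.1 hℓ₀).2
    set t : ℚ := ℓ₀ x / (-(ℓ₀ w)) with ht
    have hwpos : 0 < -(ℓ₀ w) := by linarith
    have ht0 : 0 ≤ t := div_nonneg ((hmem x).1 hx ℓ₀ hℓ₀L) hwpos.le
    refine ⟨ℓ₀, t, hℓ₀L, hℓ₀w, ?_, ?_⟩
    · rw [hmem]
      intro ℓ hℓ
      rw [map_add, map_smul, smul_eq_mul]
      rcases le_or_gt 0 (ℓ w) with hge | hlt
      · have := (hmem x).1 hx ℓ hℓ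
        nlinarith
      · have hmm : t ≤ ℓ x / (-(ℓ w)) :=
          hℓ₀min ℓ (List.mem_filter.2 ⟨hℓ, by simpa using hlt⟩)
        have hpos : 0 < -(ℓ w) := by linarith
        rw [le_div_iff₀ hpos] at hmm
        nlinarith
    · rw [map_add, map_smul, smul_eq_mul, ht]
      field_simp
      rw [div_self hℓ₀w.ne]; ring
  have finish : ∀ (ℓ₀ : (Fin N → ℚ) →ₗ[ℚ] ℚ) (t : ℚ), ℓ₀ ∈ L → ℓ₀ v ≠ 0 →
      x + t • v ∈ ρ → ℓ₀ (x + t • v) = 0 →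
      ∃ (τ' : Set (Fin N → ℚ)) (t : ℚ), IsFace ρ τ' ∧
        x + t • v ∈ τ' ∧ coneDim τ' < coneDim ρ := by
    intro ℓ₀ t hℓ₀L hℓ₀v hxt hxt0
    refine ⟨ρ ∩ {y | ℓ₀ y = 0}, t, ⟨ℓ₀, fun y hy => (hmem y).1 hy ℓ₀ hℓ₀L, rfl⟩,
      ⟨hxt, hxt0⟩, ?_⟩
    have hlt : Submodule.span ℚ (ρ ∩ {y | ℓ₀ y = 0}) < Submodule.span ℚ ρ := by
      refine lt_of_le_of_ne (Submodule.span_mono Set.inter_subset_left) ?_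
      intro h
      have hker : Submodule.span ℚ (ρ ∩ {y | ℓ₀ y = 0}) ≤ LinearMap.ker ℓ₀ := by
        rw [Submodule.span_le]
        rintro y ⟨_, hy0⟩
        exact hy0
      rw [h] at hker
      exact hℓ₀v (hker hv)
    exact Submodule.finrank_lt_finrank_of_lt hlt
  by_cases h1 : ∃ ℓ ∈ L, ℓ v < 0
  · obtain ⟨ℓ₀, t, hℓ₀L, hℓ₀v, hxt, hxt0⟩ := inner v h1
    exact finish ℓ₀ t hℓ₀L (ne_of_lt hℓ₀v) hxt hxt0
  · by_cases h2 : ∃ ℓ ∈ L, ℓ (-v) < 0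
    · obtain ⟨ℓ₀, t, hℓ₀L, hℓ₀v, hxt, hxt0⟩ := inner (-v) h2
      have hrw : x + t • (-v) = x + (-t) • v := by
        rw [smul_neg, neg_smul]
      rw [hrw] at hxt hxt0
      refine finish ℓ₀ (-t) hℓ₀L ?_ hxt hxt0
      rw [map_neg] at hℓ₀v
      intro h
      rw [h] at hℓ₀v
      simp at hℓ₀v
    · exfalso
      push_neg at h1 h2
      have hvρ : v ∈ ρ := (hmem v).2 h1
      have hnvρ : -v ∈ ρ := (hmem (-v)).2 h2
      exact hv0 (hsc v hvρ hnvρ)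

end Descent

section KerDir
variable {N n : ℕ}

open Module Submodule in
lemma exists_ker_dir (π : (Fin N → ℚ) →ₗ[ℚ] (Fin n → ℚ)) (τ : Set (Fin N → ℚ))
    (h : Module.finrank ℚ (Submodule.map π (Submodule.span ℚ τ)) < coneDim τ) :
    ∃ v, v ∈ Submodule.span ℚ τ ∧ π v = 0 ∧ v ≠ 0 := by
  have h' : Module.finrank ℚ (Submodule.map π (Submodule.span ℚ τ)) <
      Module.finrank ℚ (Submodule.span ℚ τ) := h
  set g := π.domRestrict (Submodule.span ℚ τ) with hg
  have hrange : LinearMap.range g = (Submodule.span ℚ τ).map π :=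
    LinearMap.range_domRestrict (Submodule.span ℚ τ) π
  have hrn := LinearMap.finrank_range_add_finrank_ker g
  rw [hrange] at hrn
  have hker : 0 < Module.finrank ℚ (LinearMap.ker g) := by omega
  have hbot : LinearMap.ker g ≠ ⊥ := by
    intro hb
    rw [hb] at hker
    simp at hker
  obtain ⟨a, haK, ha0⟩ := Submodule.exists_mem_ne_zero_of_ne_bot hbot
  refine ⟨(a : Fin N → ℚ), a.2, ?_, ?_⟩
  · have : g a = 0 := haK
    simpa [hg, LinearMap.domRestrict_apply] using this
  · intro hc
    exact ha0 (Subtype.ext hc)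

end KerDir
/-- If `σ ⊂ ℚ^N` is a strongly convex `N`-dimensional rational polyhedral cone,
`σ' ⊂ ℚ^n` an `n`-dimensional convex rational polyhedral cone and `π` a linear map with
`π(σ) = σ'`, then `σ'` is the union of the images of the `n`-dimensional faces of `σ`. -/
theorem cone_image_eq_union_eqdim_faces {N n : ℕ}
    (σ : Set (Fin N → ℚ)) (σ' : Set (Fin n → ℚ))
    (hσ : IsPolyCone σ) (hσsc : IsStronglyConvex σ) (hσdim : coneDim σ = N)
    (hσ' : IsPolyCone σ') (hσ'dim : coneDim σ' = n)
    (π : (Fin N → ℚ) →ₗ[ℚ] (Fin n → ℚ)) (hπ : π '' σ = σ') :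
    σ' = ⋃ τ ∈ {τ | IsFace σ τ ∧ coneDim τ = n}, π '' τ := by
  classical
  obtain ⟨T, hT⟩ := hσ
  apply Set.Subset.antisymm
  · intro x' hx'
    have hx'σ : x' ∈ π '' σ := hπ ▸ hx'
    obtain ⟨x₀, hx₀σ, hπx₀⟩ := hx'σ
    -- n ≤ N
    have hspan' : Submodule.span ℚ σ' = Submodule.map π (Submodule.span ℚ σ) := by
      rw [← hπ, Submodule.map_span]
    have hNn : n ≤ N := by
      have h1 : coneDim σ' ≤ coneDim σ := by
        unfold coneDim
        rw [hspan']
        exact Submodule.finrank_map_le π (Submodule.span ℚ σ)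
      rw [hσdim, hσ'dim] at h1
      exact h1
    -- the minimal dimension of a face through a preimage of x'
    have hPd : ∃ d : ℕ, ∃ τ, IsFace σ τ ∧ (∃ xx ∈ τ, π xx = x') ∧ coneDim τ = d :=
      ⟨N, σ, isFace_self σ, ⟨x₀, hx₀σ, hπx₀⟩, hσdim⟩
    obtain ⟨τ₀, hface, ⟨x, hxτ, hπx⟩, hdim⟩ := Nat.find_spec hPd
    set d₀ := Nat.find hPd with hd₀
    have hd₀n : d₀ ≤ n := by
      by_contra hgt
      push_neg at hgt
      obtain ⟨mτ, hmτ, hτe⟩ := hface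
      have hmτ' : ∀ y ∈ ConeGen (↑T : Set (Fin N → ℚ)), 0 ≤ mτ y := by
        rw [← hT]; exact hmτ
      have hτgen : τ₀ = ConeGen (↑(T.filter fun v => mτ v = 0) : Set (Fin N → ℚ)) := by
        rw [hτe, hT]
        exact face_eq_coneGen_filter T mτ hmτ'
      have hτsub : τ₀ ⊆ σ := by rw [hτe]; exact Set.inter_subset_left
      have hτsc : IsStronglyConvex τ₀ := fun y hy hny => hσsc y (hτsub hy) (hτsub hny)
      -- a nonzero kernel direction in the span of τ₀
      have hmaple : Module.finrank ℚ (Submodule.map π (Submodule.span ℚ τ₀)) < coneDim τ₀ := by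
        have h1 : Submodule.map π (Submodule.span ℚ τ₀) = Submodule.span ℚ (π '' τ₀) :=
          Submodule.map_span π τ₀
        have h2 : Submodule.span ℚ (π '' τ₀) ≤ Submodule.span ℚ σ' :=
          Submodule.span_mono (by rw [← hπ]; exact Set.image_mono hτsub)
        have h3 : Module.finrank ℚ (Submodule.span ℚ (π '' τ₀)) ≤ n :=
          le_trans (Submodule.finrank_mono h2) hσ'dim.le
        rw [h1]
        omega
      obtain ⟨v, hvspan, hπv, hv0⟩ := exists_ker_dir π τ₀ hmaple
      rw [hτgen] at hτsc hvspan
      have hxτ' : x ∈ ConeGen (↑(T.filter fun v => mτ v = 0) : Set (Fin N → ℚ)) := by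
        rw [← hτgen]; exact hxτ
      obtain ⟨τ', t, hτ'face, hxtτ', hτ'dim⟩ :=
        exists_smaller_face_through _ hτsc hxτ' hvspan hv0
      rw [← hτgen] at hτ'face hτ'dim
      have hfστ' : IsFace σ τ' := by
        rw [hT]
        exact isFace_trans T (hT ▸ ⟨mτ, hmτ, hτe⟩) hτ'face
      have hπxt : π (x + t • v) = x' := by
        rw [map_add, map_smul, hπv, smul_zero, add_zero, hπx]
      have hlt : coneDim τ' < d₀ := by rw [← hdim]; exact hτ'dim
      exact Nat.find_min hPd hlt ⟨τ', hfστ', ⟨x + t • v, hxtτ', hπxt⟩, rfl⟩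
    -- climb to a face of dimension exactly n
    have hfaceT : IsFace (ConeGen (↑T : Set (Fin N → ℚ))) τ₀ := hT ▸ hface
    have hdimT : coneDim (ConeGen (↑T : Set (Fin N → ℚ))) = N := by rw [← hT]; exact hσdim
    obtain ⟨τ₁, hτ₁face, hττ₁, hτ₁dim⟩ :=
      exists_face_of_dim N T τ₀ n (le_of_eq hdimT) hfaceT (by omega) (by omega)
    rw [← hT] at hτ₁face
    have hmem : τ₁ ∈ {τ | IsFace σ τ ∧ coneDim τ = n} := ⟨hτ₁face, hτ₁dim⟩
    exact Set.mem_biUnion hmem ⟨x, hττ₁ hxτ, hπx⟩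
  · intro x' hx'
    obtain ⟨τ, hτmem, hx'τ⟩ := Set.mem_iUnion₂.1 hx'
    obtain ⟨xx, hxxτ, rfl⟩ := hx'τ
    rw [← hπ]
    exact ⟨xx, hτmem.1.subset hxxτ, rfl⟩
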